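/- Let K be a field of characteristic ≠ 2 and M, N finite-dimensional K-vector spaces. For every g ∈ Hom_K(M, N) there exists an idempotent (x, y) ∈ Hom_K(M, N) × Hom_K(N, M) such that the principal inner ideal [g] = { g ∘ z ∘ g : z ∈ Hom_K(N, M) } equals the Peirce 2-space of (x, y), i.e. [g] = { w ∈ Hom_K(M, N) : x ∘ y ∘ w + w ∘ y ∘ x = 2 • w }. -/

import Mathlib

/-- Every principal inner ideal `[g]` of `Hom_K(M, N)` is the Peirce 2-space of some
idempotent pair `(x, y)`. -/
theorem principal_inner_ideal_eq_peirce_two_space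
    {K M N : Type*} [Field K] (hchar : (2 : K) ≠ 0)
    [AddCommGroup M] [Module K M] [AddCommGroup N] [Module K N]
    [FiniteDimensional K M] [FiniteDimensional K N]
    (g : M →ₗ[K] N) :
    ∃ (x : M →ₗ[K] N) (y : N →ₗ[K] M),
      x ∘ₗ y ∘ₗ x = x ∧ y ∘ₗ x ∘ₗ y = y ∧
      {w : M →ₗ[K] N | ∃ z : N →ₗ[K] M, w = g ∘ₗ z ∘ₗ g} =
        {w : M →ₗ[K] N | x ∘ₗ y ∘ₗ w + w ∘ₗ y ∘ₗ x = (2 : K) • w} := by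
  classical
  -- construct a generalized inverse y0 with g ∘ y0 ∘ g = g
  obtain ⟨q, hq⟩ := Submodule.exists_isCompl (LinearMap.range g)
  obtain ⟨r, hr⟩ := g.rangeRestrict.exists_rightInverse_of_surjective
    (LinearMap.range_rangeRestrict g)
  set p := (LinearMap.range g).linearProjOfIsCompl q hq with hp
  set y0 : N →ₗ[K] M := r ∘ₗ p with hy0
  have hrr : ∀ v : LinearMap.range g, g.rangeRestrict (r v) = v := by
    intro v
    have := congrArg (fun f => f v) hr
    simpa only [LinearMap.comp_apply, LinearMap.id_apply] using this
  have hgr : ∀ v : LinearMap.range g, g (r v) = (v : N) := by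
    intro v
    have : ((g.rangeRestrict (r v) : LinearMap.range g) : N) = (v : N) :=
      congrArg _ (hrr v)
    simpa using this
  have hg0 : ∀ m : M, g (y0 (g m)) = g m := by
    intro m
    have h1 : p (g m) = ⟨g m, LinearMap.mem_range_self g m⟩ :=
      Submodule.linearProjOfIsCompl_apply_left hq ⟨g m, LinearMap.mem_range_self g m⟩
    simp only [hy0, LinearMap.comp_apply, h1, hgr]
  set y : N →ₗ[K] M := y0 ∘ₗ g ∘ₗ y0 with hy
  have hg : ∀ m : M, g (y (g m)) = g m := by
    intro m
    simp only [hy, LinearMap.comp_apply, hg0]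
  have hxyx : g ∘ₗ y ∘ₗ g = g := by
    ext m; simpa using hg m
  have hyxy : y ∘ₗ g ∘ₗ y = y := by
    ext n
    simp only [hy, LinearMap.comp_apply, hg0]
  refine ⟨g, y, hxyx, hyxy, ?_⟩
  ext w
  simp only [Set.mem_setOf_eq]
  constructor
  · rintro ⟨z, rfl⟩
    ext m
    simp only [LinearMap.add_apply, LinearMap.comp_apply, LinearMap.smul_apply, hg]
    rw [two_smul]
  · intro h
    have hpt : ∀ m : M, g (y (w m)) + w (y (g m)) = (2 : K) • w m := by
      intro m
      have := congrArg (fun f => f m) h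
      simpa using this
    refine ⟨y ∘ₗ w ∘ₗ y, ?_⟩
    ext m
    simp only [LinearMap.comp_apply]
    have hAB : g (y (w (y (g m)))) = w (y (g m)) := by
      have h1 := hpt (y (g m))
      rw [hg m, two_smul] at h1
      exact add_right_cancel h1
    have hAC : g (y (w (y (g m)))) = g (y (w m)) := by
      have h1 := congrArg (fun n => g (y n)) (hpt m)
      simp only [map_add, map_smul] at h1
      rw [hg (y (w m)), two_smul] at h1
      exact add_left_cancel h1
    have h2 : (2 : K) • g (y (w (y (g m)))) = (2 : K) • w m := by
      rw [two_smul, ← hpt m]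
      nth_rewrite 1 [hAC]
      rw [hAB]
    exact (smul_right_injective N hchar h2).symm
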